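/- Let N ≥ 3 be odd. Then there exists a real polynomial Q in N variables such that for all a ∈ ℝ^{N−1} and b ∈ ℝ with b + |a|²/4 ≥ 0, the Lebesgue volume of {(x', x_N) : |x'|² ≤ x_N ≤ ⟨a, x'⟩ + b} equals Q(a₁, …, a_{N−1}, b). That is, for odd N the volume function defined by the elliptic paraboloid is polynomial in the hyperplane coefficients. -/

import Mathlib

open MeasureTheory Set Metric
open scoped RealInnerProductSpace ENNReal

-- graph of a measurable function is null
lemma graph_null {E : Type*} [MeasureSpace E] [SigmaFinite (volume : Measure E)]
    (φ : E → ℝ) (hφ : Measurable φ) :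
    volume {p : E × ℝ | p.2 = φ p.1} = 0 := by
  rw [Measure.volume_eq_prod, Measure.prod_apply (measurableSet_graph hφ)]
  have : ∀ x : E, (Prod.mk x ⁻¹' {p : E × ℝ | p.2 = φ p.1}) = {φ x} := by
    intro x; ext y; simp [Set.mem_singleton_iff]
  simp [this]

lemma paraboloid_key (n k : ℕ) (hn : n = 2 * k) (hk : 1 ≤ k)
    (a : EuclideanSpace ℝ (Fin n)) (b : ℝ) (hb : 0 ≤ b + ‖a‖ ^ 2 / 4) :
    volume {p : EuclideanSpace ℝ (Fin n) × ℝ | ‖p.1‖ ^ 2 ≤ p.2 ∧ p.2 ≤ ⟪a, p.1⟫ + b} =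
      volume (ball (0 : EuclideanSpace ℝ (Fin n)) 1) *
        ENNReal.ofReal ((b + ‖a‖ ^ 2 / 4) ^ (k + 1) / (k + 1)) := by
  classical
  haveI : Nontrivial (EuclideanSpace ℝ (Fin n)) := by
    refine Module.nontrivial_of_finrank_pos (R := ℝ) ?_
    rw [finrank_euclideanSpace_fin]; omega
  set S : ℝ := b + ‖a‖ ^ 2 / 4 with hS
  set f : EuclideanSpace ℝ (Fin n) → ℝ := fun x => ‖x‖ ^ 2 with hf
  set g : EuclideanSpace ℝ (Fin n) → ℝ := fun x => ⟪a, x⟫ + b with hg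
  have hfm : Measurable f := (continuous_norm.pow 2).measurable
  have hgm : Measurable g :=
    ((continuous_const.inner continuous_id).add continuous_const).measurable
  -- step A : a.e. equality with regionBetween
  have hstep1 :
      volume {p : EuclideanSpace ℝ (Fin n) × ℝ | ‖p.1‖ ^ 2 ≤ p.2 ∧ p.2 ≤ ⟪a, p.1⟫ + b} =
        volume (regionBetween f g univ) := by
    apply measure_congr
    rw [MeasureTheory.ae_eq_set]
    constructor
    · refine measure_mono_null ?_
        (measure_union_null (graph_null f hfm) (graph_null g hgm))
      rintro p ⟨⟨h1, h2⟩, hp⟩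
      simp only [regionBetween, mem_setOf_eq, mem_univ, true_and, mem_Ioo, not_and_or,
        not_lt] at hp
      rcases hp with hp | hp
      · exact Or.inl (le_antisymm hp h1)
      · exact Or.inr (le_antisymm h2 hp)
    · have hsub : regionBetween f g univ ⊆
          {p : EuclideanSpace ℝ (Fin n) × ℝ | ‖p.1‖ ^ 2 ≤ p.2 ∧ p.2 ≤ ⟪a, p.1⟫ + b} := by
        rintro p ⟨-, h1, h2⟩
        exact ⟨le_of_lt h1, le_of_lt h2⟩
      rw [diff_eq_empty.mpr hsub, measure_empty]
  rw [hstep1, Measure.volume_eq_prod,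
    volume_regionBetween_eq_lintegral' hfm hgm MeasurableSet.univ, Measure.restrict_univ]
  -- translation
  set c : EuclideanSpace ℝ (Fin n) := (2:ℝ)⁻¹ • a with hc
  have hpt : ∀ y : EuclideanSpace ℝ (Fin n), (g - f) y = S - ‖y + -c‖ ^ 2 := by
    intro y
    have h1 : ‖y + -c‖ ^ 2 = ‖y - c‖ ^ 2 := by rw [← sub_eq_add_neg]
    have h2 : ⟪y, c⟫ = 2⁻¹ * ⟪a, y⟫ := by
      rw [hc, real_inner_smul_right, real_inner_comm]
    have h3 : ‖c‖ = 2⁻¹ * ‖a‖ := by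
      rw [hc, norm_smul]; norm_num
    simp only [Pi.sub_apply, hf, hg, h1, norm_sub_sq_real, h2, h3, hS]
    ring
  have htrans : (∫⁻ y, ENNReal.ofReal ((g - f) y)) =
      ∫⁻ z : EuclideanSpace ℝ (Fin n), ENNReal.ofReal (S - ‖z‖ ^ 2) := by
    calc (∫⁻ y, ENNReal.ofReal ((g - f) y))
        = ∫⁻ y, (fun z : EuclideanSpace ℝ (Fin n) =>
            ENNReal.ofReal (S - ‖z‖ ^ 2)) (y + -c) := by
          simp only [hpt]
      _ = ∫⁻ z : EuclideanSpace ℝ (Fin n), ENNReal.ofReal (S - ‖z‖ ^ 2) :=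
          lintegral_add_right_eq_self
            (fun z : EuclideanSpace ℝ (Fin n) => ENNReal.ofReal (S - ‖z‖ ^ 2)) (-c)
  -- layer cake
  have hmax : ∀ z : EuclideanSpace ℝ (Fin n), ENNReal.ofReal (S - ‖z‖ ^ 2)
      = ENNReal.ofReal (max (S - ‖z‖ ^ 2) 0) := by
    intro z
    rcases le_total 0 (S - ‖z‖ ^ 2) with h | h
    · rw [max_eq_left h]
    · rw [max_eq_right h, ENNReal.ofReal_of_nonpos h, ENNReal.ofReal_zero]
  have hlayer : (∫⁻ z : EuclideanSpace ℝ (Fin n), ENNReal.ofReal (S - ‖z‖ ^ 2)) =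
      ∫⁻ t in Ioi (0:ℝ),
        volume {z : EuclideanSpace ℝ (Fin n) | t < max (S - ‖z‖ ^ 2) 0} := by
    simp only [hmax]
    exact lintegral_eq_lintegral_meas_lt volume
      (Filter.Eventually.of_forall fun z => le_max_right _ _)
      ((continuous_const.sub (continuous_norm.pow 2)).max continuous_const).aemeasurable
  have hsq : ∀ x : ℝ, Real.sqrt x ^ 2 = max x 0 := by
    intro x
    rcases le_total 0 x with h | h
    · rw [Real.sq_sqrt h, max_eq_left h]
    · rw [Real.sqrt_eq_zero'.mpr h, max_eq_right h]; ring
  have hset : ∀ t ∈ Ioi (0:ℝ),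
      volume {z : EuclideanSpace ℝ (Fin n) | t < max (S - ‖z‖ ^ 2) 0}
        = ENNReal.ofReal (max (S - t) 0 ^ k) *
            volume (ball (0 : EuclideanSpace ℝ (Fin n)) 1) := by
    intro t ht
    have hst : {z : EuclideanSpace ℝ (Fin n) | t < max (S - ‖z‖ ^ 2) 0}
        = ball (0 : EuclideanSpace ℝ (Fin n)) (Real.sqrt (S - t)) := by
      ext z
      simp only [mem_setOf_eq, mem_ball, dist_zero_right]
      rw [Real.lt_sqrt (norm_nonneg z)]
      constructor
      · intro h
        rcases lt_max_iff.mp h with h | h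
        · linarith
        · exact absurd h (not_lt.mpr (le_of_lt ht))
      · intro h
        exact lt_max_iff.mpr (Or.inl (by linarith))
    rw [hst, Measure.addHaar_ball _ _ (Real.sqrt_nonneg _), finrank_euclideanSpace_fin]
    congr 2
    rw [hn, pow_mul, hsq]
  -- compute the one-dimensional integral
  have hk0 : k ≠ 0 := by omega
  have hJ : (∫⁻ t in Ioi (0:ℝ), ENNReal.ofReal (max (S - t) 0 ^ k))
      = ENNReal.ofReal (S ^ (k + 1) / (k + 1)) := by
    rw [← Ioc_union_Ioi_eq_Ioi hb,
      lintegral_union measurableSet_Ioi Ioc_disjoint_Ioi_same]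
    have hzero : ∀ t ∈ Ioi S, ENNReal.ofReal (max (S - t) 0 ^ k) = 0 := by
      intro t ht
      rw [max_eq_right (by simp only [mem_Ioi] at ht; linarith), zero_pow hk0,
        ENNReal.ofReal_zero]
    rw [setLIntegral_congr_fun measurableSet_Ioi hzero,
      lintegral_zero, add_zero]
    have heq : ∀ t ∈ Ioc (0:ℝ) S, ENNReal.ofReal (max (S - t) 0 ^ k)
        = ENNReal.ofReal ((S - t) ^ k) := by
      intro t ht
      rw [max_eq_left (by linarith [ht.2])]
    rw [setLIntegral_congr_fun measurableSet_Ioc heq,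
      ← ofReal_integral_eq_lintegral_ofReal]
    · congr 1
      rw [← intervalIntegral.integral_of_le hb]
      rw [intervalIntegral.integral_comp_sub_left (fun u => u ^ k) S]
      rw [sub_self, sub_zero, integral_pow]
      norm_num
    · exact ((continuous_const.sub continuous_id).pow k).integrableOn_Ioc
    · filter_upwards [ae_restrict_mem measurableSet_Ioc] with t ht
      exact pow_nonneg (by linarith [ht.2]) k
  calc (∫⁻ y, ENNReal.ofReal ((g - f) y))
      = ∫⁻ t in Ioi (0:ℝ),
          volume {z : EuclideanSpace ℝ (Fin n) | t < max (S - ‖z‖ ^ 2) 0} := by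
        rw [htrans, hlayer]
    _ = ∫⁻ t in Ioi (0:ℝ), ENNReal.ofReal (max (S - t) 0 ^ k) *
          volume (ball (0 : EuclideanSpace ℝ (Fin n)) 1) :=
        setLIntegral_congr_fun measurableSet_Ioi hset
    _ = (∫⁻ t in Ioi (0:ℝ), ENNReal.ofReal (max (S - t) 0 ^ k)) *
          volume (ball (0 : EuclideanSpace ℝ (Fin n)) 1) :=
        lintegral_mul_const' _ _ measure_ball_lt_top.ne
    _ = volume (ball (0 : EuclideanSpace ℝ (Fin n)) 1) *
          ENNReal.ofReal (S ^ (k + 1) / (k + 1)) := by rw [hJ, mul_comm]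

/-- Let `N ≥ 3` be odd.  There is a real polynomial `Q` in `N`
variables such that for all `a ∈ ℝ^{N−1}` and `b ∈ ℝ` with `b + |a|²/4 ≥ 0`, the volume of
`{(x', x_N) : |x'|² ≤ x_N ≤ ⟨a,x'⟩ + b}` equals `Q(a₁, …, a_{N−1}, b)`: for odd `N` the
volume function of the elliptic paraboloid is polynomial in the hyperplane coefficients. -/
theorem paraboloid_volume_polynomial_odd (N : ℕ) (hN : 3 ≤ N) (hNodd : Odd N) :
    ∃ Q : MvPolynomial (Fin (N - 1) ⊕ Unit) ℝ,
      ∀ (a : EuclideanSpace ℝ (Fin (N - 1))) (b : ℝ), 0 ≤ b + ‖a‖ ^ 2 / 4 →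
        (volume {p : EuclideanSpace ℝ (Fin (N - 1)) × ℝ |
            ‖p.1‖ ^ 2 ≤ p.2 ∧ p.2 ≤ ⟪a, p.1⟫ + b}).toReal =
          MvPolynomial.eval (Sum.elim (fun i => a i) (fun _ => b)) Q := by
  classical
  obtain ⟨m, hm⟩ := hNodd
  have hn : N - 1 = 2 * m := by omega
  have hm1 : 1 ≤ m := by omega
  set V : ℝ := (volume (ball (0 : EuclideanSpace ℝ (Fin (N - 1))) 1)).toReal with hV
  refine ⟨MvPolynomial.C (V / (m + 1)) *
    (MvPolynomial.X (Sum.inr ()) +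
      MvPolynomial.C (4:ℝ)⁻¹ * ∑ i : Fin (N - 1), MvPolynomial.X (Sum.inl i) ^ 2) ^ (m + 1),
    ?_⟩
  intro a b hb
  have hkey := paraboloid_key (N - 1) m hn hm1 a b hb
  have hnorm : ‖a‖ ^ 2 = ∑ i : Fin (N - 1), a i ^ 2 := by
    rw [EuclideanSpace.norm_sq_eq]
    simp [Real.norm_eq_abs, sq_abs]
  rw [hkey, ENNReal.toReal_mul, ENNReal.toReal_ofReal (by positivity)]
  simp only [map_mul, map_pow, map_add, MvPolynomial.eval_C, MvPolynomial.eval_X,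
    map_sum, Sum.elim_inr, Sum.elim_inl]
  rw [hnorm, div_eq_mul_inv, div_eq_mul_inv]
  push_cast
  ring
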